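/- Let X and Y be permutations of {1,...,n} and suppose indices i, j satisfy X_i < X_j and Y_i < Y_j. Let Z be Y with the values at i and j swapped (Z_i = Y_j, Z_j = Y_i, Z_k = Y_k otherwise). Then τ(X,Z) ≥ τ(X,Y). -/

import Mathlib

/-- Swapping a concordant pair in one ranking weakly increases the `τ`
distance: if `X i < X j` and `Y i < Y j`, and `Z` is `Y` with the values at
`i` and `j` exchanged, then `τ(X,Y) ≤ τ(X,Z)`. -/
theorem tau_swap_concordant (n : ℕ) (X Y : Equiv.Perm (Fin n)) (i j : Fin n)
    (hX : X i < X j) (hY : Y i < Y j) :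
    Real.sqrt (∑ k : Fin n,
        (Real.log ((X k : ℕ) + 1) - Real.log ((Y k : ℕ) + 1)) ^ 2)
      ≤ Real.sqrt (∑ k : Fin n,
        (Real.log ((X k : ℕ) + 1) - Real.log ((Y (Equiv.swap i j k) : ℕ) + 1)) ^ 2) := by
  rcases eq_or_ne i j with rfl | hij
  · simp
  apply Real.sqrt_le_sqrt
  have hsub : ({i, j} : Finset (Fin n)) ⊆ Finset.univ := Finset.subset_univ _
  rw [← Finset.sum_sdiff hsub, ← Finset.sum_sdiff hsub]
  have hcompl : ∀ k ∈ Finset.univ \ ({i, j} : Finset (Fin n)),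
      (Real.log ((X k : ℕ) + 1) - Real.log ((Y k : ℕ) + 1)) ^ 2 =
      (Real.log ((X k : ℕ) + 1) - Real.log ((Y (Equiv.swap i j k) : ℕ) + 1)) ^ 2 := by
    intro k hk
    simp only [Finset.mem_sdiff, Finset.mem_insert, Finset.mem_singleton] at hk
    rw [Equiv.swap_apply_of_ne_of_ne (by tauto) (by tauto)]
  rw [Finset.sum_congr rfl hcompl]
  apply add_le_add le_rfl
  rw [Finset.sum_pair hij, Finset.sum_pair hij, Equiv.swap_apply_left, Equiv.swap_apply_right]
  set a := Real.log ((X i : ℕ) + 1)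
  set c := Real.log ((X j : ℕ) + 1)
  set b := Real.log ((Y i : ℕ) + 1)
  set d := Real.log ((Y j : ℕ) + 1)
  have hac : a ≤ c := by
    apply Real.log_le_log (by positivity)
    have : (X i : ℕ) ≤ (X j : ℕ) := le_of_lt hX
    exact_mod_cast Nat.succ_le_succ this
  have hbd : b ≤ d := by
    apply Real.log_le_log (by positivity)
    have : (Y i : ℕ) ≤ (Y j : ℕ) := le_of_lt hY
    exact_mod_cast Nat.succ_le_succ this
  nlinarith [mul_nonneg (sub_nonneg.mpr hac) (sub_nonneg.mpr hbd)]
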